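/- For interlaced points −1 = μ_{1/2} < μ_1 < ... < μ_N < μ_{N+1/2} = 1 and φ(μ) = μ³, the centered-difference error satisfies E_n*(φ) = −(h*_n)² − 3(d*_n)² − 6 μ_n d*_n, where h*_n = (μ_{n+1/2} − μ_{n-1/2})/2 and d*_n = (μ_{n-1/2}+μ_{n+1/2})/2 − μ_n; consequently (M_N*)² ≤ 4·max_{1≤n≤N}|E_n*(φ)| + 24·D_N*, where M_N* = 2 max h*_n and D_N* = max |d*_n|. -/

import Mathlib

/-- for `φ(μ) = μ³`, the centered-difference error is exactly
`E_n* = −(h*_n)² − 3(d*_n)² − 6 μ_n d*_n`, and consequently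
`(M_N*)² ≤ 4·max_n |E_n*| + 24·D_N*`. -/
theorem stmt19 (N : ℕ) (hN : 1 ≤ N) (μ p : ℕ → ℝ)
    (hp0 : p 0 = -1) (hpN : p N = 1)
    (hinter : ∀ n ∈ Finset.Icc 1 N, p (n - 1) < μ n ∧ μ n < p n) :
    (∀ n ∈ Finset.Icc 1 N,
        3 * (μ n) ^ 2 - ((p n) ^ 3 - (p (n - 1)) ^ 3) / (p n - p (n - 1)) =
          -((p n - p (n - 1)) / 2) ^ 2 - 3 * ((p (n - 1) + p n) / 2 - μ n) ^ 2
            - 6 * μ n * ((p (n - 1) + p n) / 2 - μ n))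
    ∧ ((Finset.Icc 1 N).sup' (Finset.nonempty_Icc.mpr hN) (fun n => p n - p (n - 1))) ^ 2
        ≤ 4 * (Finset.Icc 1 N).sup' (Finset.nonempty_Icc.mpr hN)
            (fun n => |3 * (μ n) ^ 2 - ((p n) ^ 3 - (p (n - 1)) ^ 3) / (p n - p (n - 1))|)
          + 24 * (Finset.Icc 1 N).sup' (Finset.nonempty_Icc.mpr hN)
            (fun n => |(p (n - 1) + p n) / 2 - μ n|) := by
  have hne : ∀ n ∈ Finset.Icc 1 N, p n - p (n - 1) ≠ 0 := by
    intro n hn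
    have h := hinter n hn
    linarith [h.1, h.2]
  have hiden : ∀ n ∈ Finset.Icc 1 N,
      3 * (μ n) ^ 2 - ((p n) ^ 3 - (p (n - 1)) ^ 3) / (p n - p (n - 1)) =
        -((p n - p (n - 1)) / 2) ^ 2 - 3 * ((p (n - 1) + p n) / 2 - μ n) ^ 2
          - 6 * μ n * ((p (n - 1) + p n) / 2 - μ n) := by
    intro n hn
    have h := hne n hn
    field_simp
    ring
  refine ⟨hiden, ?_⟩
  -- p bounded below by -1
  have hlow : ∀ k, k ≤ N → -1 ≤ p k := by
    intro k
    induction k with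
    | zero => intro _; rw [hp0]
    | succ m ih =>
        intro hm
        have hmem : m + 1 ∈ Finset.Icc 1 N := Finset.mem_Icc.mpr ⟨Nat.le_add_left 1 m, hm⟩
        have h := hinter (m + 1) hmem
        have : -1 ≤ p m := ih (Nat.le_of_succ_le hm)
        simp only [Nat.add_sub_cancel] at h
        linarith [h.1, h.2]
  -- p bounded above by 1
  have hupaux : ∀ j k, k + j = N → p k ≤ 1 := by
    intro j
    induction j with
    | zero => intro k hk; simp at hk; rw [hk, hpN]
    | succ m ih =>
        intro k hk
        have hk1 : (k + 1) + m = N := by omega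
        have h1 : p (k + 1) ≤ 1 := ih (k + 1) hk1
        have hmem : k + 1 ∈ Finset.Icc 1 N := Finset.mem_Icc.mpr ⟨Nat.le_add_left 1 k, by omega⟩
        have h := hinter (k + 1) hmem
        simp only [Nat.add_sub_cancel] at h
        linarith [h.1, h.2]
  have hup : ∀ k, k ≤ N → p k ≤ 1 := fun k hk => hupaux (N - k) k (by omega)
  -- key pointwise bound
  have key : ∀ n ∈ Finset.Icc 1 N,
      (p n - p (n - 1)) ^ 2 ≤
        4 * |3 * (μ n) ^ 2 - ((p n) ^ 3 - (p (n - 1)) ^ 3) / (p n - p (n - 1))|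
          + 24 * |(p (n - 1) + p n) / 2 - μ n| := by
    intro n hn
    obtain ⟨hn1, hn2⟩ := Finset.mem_Icc.mp hn
    have hmu := hinter n hn
    have hmu1 : -1 ≤ p (n - 1) := hlow (n - 1) (by omega)
    have hmu2 : p n ≤ 1 := hup n hn2
    have hE := hiden n hn
    set E := 3 * (μ n) ^ 2 - ((p n) ^ 3 - (p (n - 1)) ^ 3) / (p n - p (n - 1)) with hEdef
    set d := (p (n - 1) + p n) / 2 - μ n with hddef
    have hmudlow : p (n - 1) < μ n := hmu.1
    have hmudhigh : μ n < p n := hmu.2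
    clear_value E d
    have habs1 : -E ≤ |E| := neg_le_abs E
    have hmub1 : -1 ≤ μ n := by linarith [hmu.1]
    have hmub2 : μ n ≤ 1 := by linarith [hmu.2]
    have habsμ : |μ n| ≤ 1 := abs_le.mpr ⟨hmub1, hmub2⟩
    have hμd : -(μ n * d) ≤ |d| := by
      have h1 : -(μ n * d) ≤ |μ n * d| := neg_le_abs _
      have h2 : |μ n * d| = |μ n| * |d| := abs_mul _ _
      nlinarith [abs_nonneg d]
    have hsq : ((p n - p (n - 1)) / 2) ^ 2 = (p n - p (n - 1)) ^ 2 / 4 := by ring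
    nlinarith [sq_nonneg d, hE, hsq, habs1, hμd, le_abs_self d, neg_le_abs d]
  -- choose witness for sup of h
  obtain ⟨m, hm, hmeq⟩ := Finset.exists_mem_eq_sup' (Finset.nonempty_Icc.mpr hN)
    (fun n => p n - p (n - 1))
  rw [hmeq]
  have hEle := Finset.le_sup' (f := fun n =>
      |3 * (μ n) ^ 2 - ((p n) ^ 3 - (p (n - 1)) ^ 3) / (p n - p (n - 1))|) hm
  have hDle := Finset.le_sup' (f := fun n => |(p (n - 1) + p n) / 2 - μ n|) hm
  have hk := key m hm
  linarith
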